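/- Any unoriented assembly point on two scaffolds lying in the same connected component of OG(A) is consistently orientable: if Ā is a non-conflicting realization of A and scaffolds s_i, s_j lie in the same connected component (a path or cycle) of OG(Ā), then the unoriented point (s_i, s_j) has a realization consistent with Ā. Moreover, if that component is a cycle, every semi-oriented point on s_i, s_j also has a consistent realization. -/

import Mathlib

/-- An assembly point: two scaffolds with partial orientation data
(`none` = unoriented, `some b` = oriented, `true` = forward). -/
structure APoint (S : Type) where
  s1 : S
  s2 : S
  o1 : Option Bool
  o2 : Option Bool
deriving DecidableEq

/-- A global orientation `σ` extends (is consistent with) the partial data of `p`. -/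
def APoint.extends' {S : Type} (σ : S → Bool) (p : APoint S) : Prop :=
  (∀ b, p.o1 = some b → σ p.s1 = b) ∧ (∀ b, p.o2 = some b → σ p.s2 = b)

/-- The extremity of its left scaffold used by a point realized via `σ`
(head `(s, true)` if `s` is forward). -/
def APoint.usedL {S : Type} (σ : S → Bool) (p : APoint S) : S × Bool := (p.s1, σ p.s1)

/-- The extremity of its right scaffold used by a point realized via `σ`
(tail `(s, false)` if `s` is forward). -/
def APoint.usedR {S : Type} (σ : S → Bool) (p : APoint S) : S × Bool := (p.s2, !σ p.s2)

/-- Two realized points use disjoint sets of extremities (are non-conflicting). -/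
def APoint.disj {S : Type} (τ τ' : S → Bool) (p q : APoint S) : Prop :=
  p.usedL τ ≠ q.usedL τ' ∧ p.usedL τ ≠ q.usedR τ' ∧
  p.usedR τ ≠ q.usedL τ' ∧ p.usedR τ ≠ q.usedR τ'

/-- `σ` is a non-conflicting realization of the assembly `A`: it extends the partial
orientation data of every point, and every scaffold extremity is used at most once. -/
def NCR {S : Type} (A : Finset (APoint S)) (σ : S → Bool) : Prop :=
  (∀ p ∈ A, p.extends' σ) ∧
  (∀ p ∈ A, p.usedL σ ≠ p.usedR σ) ∧
  (∀ p ∈ A, ∀ q ∈ A, p ≠ q → APoint.disj σ σ p q)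

/-- The scaffolds occurring in an assembly. -/
def scafs {S : Type} [DecidableEq S] (A : Finset (APoint S)) : Finset S :=
  A.biUnion (fun p => {p.s1, p.s2})

/-- Adjacency edges of the scaffold assembly graph `SAG` of the realization of `A`
by `σ`: the undirected edges joining the used extremities of each point. -/
def adjE {S : Type} (A : Finset (APoint S)) (σ : S → Bool) (x y : S × Bool) : Prop :=
  ∃ p ∈ A, (p.usedL σ = x ∧ p.usedR σ = y) ∨ (p.usedL σ = y ∧ p.usedR σ = x)

/-- One step of an alternating walk in `SAG`: follow an adjacency edge from extremity
`x` to an extremity `y`, then traverse the scaffold edge of `y.1` to its other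
extremity. -/
def stepR {S : Type} (A : Finset (APoint S)) (σ : S → Bool) (x z : S × Bool) : Prop :=
  ∃ y : S × Bool, adjE A σ x y ∧ z = (y.1, !y.2)

/-- An assembly point `q` has a consistent orientation with the realization of `A` by
`σ`: some realization `(b1, b2)` of `q` is connected by an alternating walk in `SAG`
leaving `q.s1` through the extremity dictated by `b1` and entering `q.s2` through the
extremity dictated by `b2` (matching end-edge directions). -/
def consistentPt {S : Type} (A : Finset (APoint S)) (σ : S → Bool) (q : APoint S) :
    Prop :=
  ∃ b1 b2 : Bool, (∀ c, q.o1 = some c → b1 = c) ∧ (∀ c, q.o2 = some c → b2 = c) ∧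
    ∃ x : S × Bool,
      Relation.ReflTransGen (stepR A σ) (q.s1, b1) x ∧ adjE A σ x (q.s2, !b2)

open Classical in
/-- The score of a realization: the number of points of `O` consistently oriented. -/
noncomputable def score {S : Type} (A O : Finset (APoint S)) (σ : S → Bool) : ℕ :=
  (O.filter (fun q => consistentPt A σ q)).card

/-- Adjacency in the order graph of an assembly with partial orientation data. -/
def ogAdjP {S : Type} (A : Finset (APoint S)) (s t : S) : Prop :=
  ∃ p ∈ A, (p.s1 = s ∧ p.s2 = t) ∨ (p.s1 = t ∧ p.s2 = s)


set_option linter.unusedSectionVars false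

namespace SCCO

variable {S : Type} [DecidableEq S]

/-- Flip an extremity to the other extremity of the same scaffold. -/
def flipE (x : S × Bool) : S × Bool := (x.1, !x.2)

@[simp] lemma flipE_flipE (x : S × Bool) : flipE (flipE x) = x := by
  simp [flipE]

lemma adjE_symm {A : Finset (APoint S)} {σ : S → Bool} {x y : S × Bool}
    (h : adjE A σ x y) : adjE A σ y x := by
  obtain ⟨p, hp, h | h⟩ := h
  exacts [⟨p, hp, Or.inr h⟩, ⟨p, hp, Or.inl h⟩]

/-- Two points of a non-conflicting realization using a common extremity coincide. -/
lemma point_unique {A : Finset (APoint S)} {σ : S → Bool} (h : NCR A σ)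
    {p q : APoint S} {e : S × Bool} (hp : p ∈ A) (hq : q ∈ A)
    (hpe : p.usedL σ = e ∨ p.usedR σ = e) (hqe : q.usedL σ = e ∨ q.usedR σ = e) :
    p = q := by
  by_contra hne
  obtain ⟨d1, d2, d3, d4⟩ := h.2.2 p hp q hq hne
  rcases hpe with h1 | h1 <;> rcases hqe with h2 | h2 <;> simp_all

/-- In SAG each extremity has at most one neighbour. -/
lemma adjE_func {A : Finset (APoint S)} {σ : S → Bool} (h : NCR A σ)
    {x y y' : S × Bool} (h1 : adjE A σ x y) (h2 : adjE A σ x y') : y = y' := by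
  obtain ⟨p, hp, hp'⟩ := h1
  obtain ⟨q, hq, hq'⟩ := h2
  have hpq : p = q := by
    refine point_unique h hp hq (e := x) ?_ ?_
    · rcases hp' with ⟨a, b⟩ | ⟨a, b⟩
      exacts [Or.inl a, Or.inr b]
    · rcases hq' with ⟨a, b⟩ | ⟨a, b⟩
      exacts [Or.inl a, Or.inr b]
  subst hpq
  have hLR := h.2.1 p hp
  rcases hp' with ⟨a1, a2⟩ | ⟨a1, a2⟩ <;> rcases hq' with ⟨b1, b2⟩ | ⟨b1, b2⟩ <;>
    simp_all

lemma stepR_det {A : Finset (APoint S)} {σ : S → Bool} (h : NCR A σ)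
    {x z z' : S × Bool} (h1 : stepR A σ x z) (h2 : stepR A σ x z') : z = z' := by
  obtain ⟨y, hy, rfl⟩ := h1
  obtain ⟨y', hy', rfl⟩ := h2
  rw [adjE_func h hy hy']

lemma stepR_adj {A : Finset (APoint S)} {σ : S → Bool}
    {x z : S × Bool} (hs : stepR A σ x z) : adjE A σ x (flipE z) := by
  obtain ⟨y, hy, rfl⟩ := hs
  simpa [flipE] using hy

lemma stepR_inj {A : Finset (APoint S)} {σ : S → Bool} (h : NCR A σ)
    {a b c : S × Bool} (h1 : stepR A σ a c) (h2 : stepR A σ b c) : a = b :=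
  adjE_func h (adjE_symm (stepR_adj h1)) (adjE_symm (stepR_adj h2))

/-- Reverse an alternating walk. -/
lemma rtg_rev {A : Finset (APoint S)} {σ : S → Bool} {a z : S × Bool}
    (hw : Relation.ReflTransGen (stepR A σ) a z) :
    Relation.ReflTransGen (stepR A σ) (flipE z) (flipE a) := by
  induction hw with
  | refl => exact .refl
  | tail hwx hstep ih =>
    rename_i w z'
    refine Relation.ReflTransGen.head ?_ ih
    obtain ⟨y, hy, rfl⟩ := hstep
    exact ⟨w, adjE_symm (by simpa [flipE] using hy), rfl⟩

lemma stepR_og {A : Finset (APoint S)} {σ : S → Bool} {x z : S × Bool}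
    (hs : stepR A σ x z) : ogAdjP A x.1 z.1 := by
  obtain ⟨y, ⟨p, hp, h | h⟩, rfl⟩ := hs
  · exact ⟨p, hp, Or.inl ⟨by rw [← h.1]; rfl, by rw [← h.2]; rfl⟩⟩
  · exact ⟨p, hp, Or.inr ⟨by rw [← h.1]; rfl, by rw [← h.2]; rfl⟩⟩

lemma ogAdjP_mem {A : Finset (APoint S)} {s t : S} (h : ogAdjP A s t) :
    s ∈ scafs A ∧ t ∈ scafs A := by
  obtain ⟨p, hp, ⟨h1, h2⟩ | ⟨h1, h2⟩⟩ := h <;>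
    constructor <;>
    · refine Finset.mem_biUnion.mpr ⟨p, hp, ?_⟩
      simp_all

lemma ogAdjP_symm {A : Finset (APoint S)} : Symmetric (ogAdjP A) := by
  rintro s t ⟨p, hp, h | h⟩
  exacts [⟨p, hp, Or.inr h⟩, ⟨p, hp, Or.inl h⟩]

/-- The realized OG edge `t — t'` provides an SAG adjacency between
an extremity of `t` and an extremity of `t'`. -/
lemma edge_to_adj {A : Finset (APoint S)} {σ : S → Bool} {t t' : S}
    (he : ogAdjP A t t') : ∃ d d' : Bool, adjE A σ (t, d) (t', d') := by
  obtain ⟨q, hq, ⟨h1, h2⟩ | ⟨h1, h2⟩⟩ := he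
  · exact ⟨σ t, !σ t', q, hq, Or.inl ⟨by rw [APoint.usedL, h1], by rw [APoint.usedR, h2]⟩⟩
  · exact ⟨!σ t, σ t', q, hq, Or.inr ⟨by rw [APoint.usedL, h1], by rw [APoint.usedR, h2]⟩⟩

/-- STATEMENT 12 main induction: along any OG-path from `u` there is an alternating
walk starting at an extremity of `u` whose last edge enters the target scaffold. -/
lemma main1 {A : Finset (APoint S)} {σ : S → Bool} (h : NCR A σ) (u : S) :
    ∀ t, Relation.ReflTransGen (ogAdjP A) u t →
      t = u ∨ ∃ b c x, Relation.ReflTransGen (stepR A σ) (u, b) x ∧ adjE A σ x (t, c) := by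
  intro t ht
  induction ht with
  | refl => exact Or.inl rfl
  | tail hut hedge ih =>
    rename_i t t'
    obtain ⟨d, d', hadj2⟩ := edge_to_adj (σ := σ) hedge
    rcases ih with rfl | ⟨b, c, x, hw, hadj⟩
    · exact Or.inr ⟨d, d', (t, d), .refl, hadj2⟩
    · by_cases hdc : d = c
      · -- conflict: the edge into t' is the one we arrived by
        subst hdc
        have hx : x = (t', d') := adjE_func h (adjE_symm hadj) hadj2
        subst hx
        rcases Relation.ReflTransGen.cases_tail hw with heq | ⟨w, hw', hstep⟩
        · exact Or.inl (congrArg Prod.fst heq)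
        · exact Or.inr ⟨b, !d', w, hw', by simpa [flipE] using stepR_adj hstep⟩
      · have hd : d = !c := by cases d <;> cases c <;> simp_all
        subst hd
        refine Or.inr ⟨b, d', (t, !c), hw.tail ⟨(t, c), hadj, rfl⟩, hadj2⟩

/-- A point incident to a used extremity yields an outgoing alternation step. -/
lemma use_to_step {A : Finset (APoint S)} {σ : S → Bool} {r : APoint S}
    {x : S × Bool} (hr : r ∈ A) (hx : r.usedL σ = x ∨ r.usedR σ = x) :
    ∃ z, stepR A σ x z := by
  rcases hx with hx | hx
  · exact ⟨flipE (r.usedR σ), r.usedR σ, ⟨r, hr, Or.inl ⟨hx, rfl⟩⟩, rfl⟩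
  · exact ⟨flipE (r.usedL σ), r.usedL σ, ⟨r, hr, Or.inr ⟨rfl, hx⟩⟩, rfl⟩

/-- In a cycle component every extremity is used, so a step is always possible. -/
lemma totality {A : Finset (APoint S)} {σ : S → Bool} (h : NCR A σ) (u : S)
    (hcyc : ∀ w, Relation.ReflTransGen (ogAdjP A) u w →
      (A.filter (fun p => p.s1 = w ∨ p.s2 = w)).card = 2) :
    ∀ x : S × Bool, Relation.ReflTransGen (ogAdjP A) u x.1 → ∃ z, stepR A σ x z := by
  rintro ⟨w, d⟩ hw
  obtain ⟨p, q, hpq, hset⟩ := Finset.card_eq_two.mp (hcyc w hw)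
  have hp : p ∈ A.filter (fun p => p.s1 = w ∨ p.s2 = w) := by
    rw [hset]; exact Finset.mem_insert_self _ _
  have hq : q ∈ A.filter (fun p => p.s1 = w ∨ p.s2 = w) := by
    rw [hset]; exact Finset.mem_insert_of_mem (Finset.mem_singleton_self _)
  rw [Finset.mem_filter] at hp hq
  have key : ∀ r : APoint S, r ∈ A → (r.s1 = w ∨ r.s2 = w) →
      ∃ e : Bool, r.usedL σ = (w, e) ∨ r.usedR σ = (w, e) := by
    rintro r hr (h1 | h1)
    · exact ⟨σ w, Or.inl (by rw [APoint.usedL, h1])⟩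
    · exact ⟨!σ w, Or.inr (by rw [APoint.usedR, h1])⟩
  obtain ⟨ep, hep⟩ := key p hp.1 hp.2
  obtain ⟨eq', heq'⟩ := key q hq.1 hq.2
  by_cases hpd : ep = d
  · exact use_to_step hp.1 (hpd ▸ hep)
  by_cases hqd : eq' = d
  · exact use_to_step hq.1 (hqd ▸ heq')
  · exfalso
    have : ep = eq' := by cases ep <;> cases eq' <;> cases d <;> simp_all
    exact hpq (point_unique h hp.1 hq.1 hep (this ▸ heq'))

open Classical in
/-- A choice of successor for the alternating-walk dynamics. -/
noncomputable def nextE (A : Finset (APoint S)) (σ : S → Bool) (x : S × Bool) :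
    S × Bool :=
  if h : ∃ z, stepR A σ x z then h.choose else x

lemma nextE_step {A : Finset (APoint S)} {σ : S → Bool} {x : S × Bool}
    (h : ∃ z, stepR A σ x z) : stepR A σ x (nextE A σ x) := by
  rw [nextE, dif_pos h]; exact h.choose_spec

section Dynamics

variable {A : Finset (APoint S)} {σ : S → Bool} {u : S}


variable (hN : NCR A σ)
  (htot : ∀ x : S × Bool, Relation.ReflTransGen (ogAdjP A) u x.1 → ∃ z, stepR A σ x z)

include htot

lemma it_comp {x : S × Bool} (hx : Relation.ReflTransGen (ogAdjP A) u x.1) :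
    ∀ n, Relation.ReflTransGen (ogAdjP A) u ((nextE A σ)^[n] x).1 ∧
      Relation.ReflTransGen (stepR A σ) x ((nextE A σ)^[n] x) := by
  intro n
  induction n with
  | zero => exact ⟨hx, .refl⟩
  | succ n ih =>
    have hstep : stepR A σ ((nextE A σ)^[n] x) ((nextE A σ)^[n+1] x) := by
      rw [Function.iterate_succ_apply']
      exact nextE_step (htot _ ih.1)
    exact ⟨ih.1.tail (stepR_og hstep), ih.2.tail hstep⟩

include hN

lemma orbit {x y : S × Bool} (hx : Relation.ReflTransGen (ogAdjP A) u x.1)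
    (hP : Relation.ReflTransGen (stepR A σ) x y) : ∃ n, y = (nextE A σ)^[n] x := by
  induction hP with
  | refl => exact ⟨0, rfl⟩
  | tail hw hstep ih =>
    obtain ⟨n, rfl⟩ := ih
    have hstep' : stepR A σ ((nextE A σ)^[n] x) ((nextE A σ)^[n+1] x) := by
      rw [Function.iterate_succ_apply']
      exact nextE_step (htot _ (it_comp htot hx n).1)
    exact ⟨n + 1, stepR_det hN hstep hstep'⟩

lemma iter_inj : ∀ (n : ℕ) (a b : S × Bool), Relation.ReflTransGen (ogAdjP A) u a.1 → Relation.ReflTransGen (ogAdjP A) u b.1 →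
    (nextE A σ)^[n] a = (nextE A σ)^[n] b → a = b := by
  intro n
  induction n with
  | zero => intro a b _ _ h'; exact h'
  | succ n ih =>
    intro a b ha hb h'
    have hsa : stepR A σ a (nextE A σ a) := nextE_step (htot _ ha)
    have hsb : stepR A σ b (nextE A σ b) := nextE_step (htot _ hb)
    have h2 : nextE A σ a = nextE A σ b := by
      refine ih _ _ (ha.tail (stepR_og hsa)) (hb.tail (stepR_og hsb)) ?_
      simpa [Function.iterate_succ_apply] using h'
    exact stepR_inj hN (h2 ▸ hsa) hsb

lemma it_scafs {x : S × Bool} (hx : Relation.ReflTransGen (ogAdjP A) u x.1) (hxs : x.1 ∈ scafs A) :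
    ∀ n, ((nextE A σ)^[n] x).1 ∈ scafs A := by
  intro n
  cases n with
  | zero => exact hxs
  | succ n =>
    have hstep : stepR A σ ((nextE A σ)^[n] x) ((nextE A σ)^[n+1] x) := by
      rw [Function.iterate_succ_apply']
      exact nextE_step (htot _ (it_comp htot hx n).1)
    exact (ogAdjP_mem (stepR_og hstep)).2

/-- Recurrence: on a cycle component, walks can be retraced. -/
lemma reach_back {x y : S × Bool} (hx : Relation.ReflTransGen (ogAdjP A) u x.1) (hxs : x.1 ∈ scafs A)
    (hP : Relation.ReflTransGen (stepR A σ) x y) :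
    Relation.ReflTransGen (stepR A σ) y x := by
  classical
  set f := nextE A σ with hf
  -- pigeonhole on iterates of x
  set E : Finset (S × Bool) := scafs A ×ˢ (Finset.univ : Finset Bool) with hE
  have hmaps : ∀ i ∈ Finset.range (E.card + 1), f^[i] x ∈ E := by
    intro i _
    exact Finset.mem_product.mpr ⟨it_scafs hN htot hx hxs i, Finset.mem_univ _⟩
  obtain ⟨n, -, m, -, hnm, heqnm⟩ :=
    Finset.exists_ne_map_eq_of_card_lt_of_maps_to
      (by rw [Finset.card_range]; omega) hmaps
  -- wlog n < m
  wlog hlt : n < m generalizing n m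
  · exact this m n (Ne.symm hnm) heqnm.symm (by omega)
  -- x is periodic with period p := m - n ≥ 1
  set p := m - n with hp
  have hper : f^[p] x = x := by
    have h1 : f^[n] (f^[p] x) = f^[n] x := by
      rw [← Function.iterate_add_apply, hp]
      rw [Nat.add_sub_cancel' (le_of_lt hlt)]
      exact heqnm.symm
    exact iter_inj hN htot n _ _ (it_comp htot (it_comp htot hx 0).1 p).1 hx h1
  have hper' : ∀ k, f^[k * p] x = x := by
    intro k
    induction k with
    | zero => simp
    | succ k ih =>
      rw [Nat.succ_mul, Function.iterate_add_apply, hper, ih]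
  obtain ⟨k, rfl⟩ := orbit hN htot hx hP
  have hkp : k ≤ k * p := Nat.le_mul_of_pos_right k (by omega)
  have : f^[k * p - k] (f^[k] x) = x := by
    rw [← Function.iterate_add_apply, Nat.sub_add_cancel hkp]
    exact hper' k
  calc Relation.ReflTransGen (stepR A σ) (f^[k] x) (f^[k * p - k] (f^[k] x)) :=
    (it_comp htot (it_comp htot hx k).1 _).2
  _ = x := this

end Dynamics

/-- On a cycle component, from EVERY extremity of `u` there is an alternating walk
whose last edge enters `v`. -/
lemma cycle_all {A : Finset (APoint S)} {σ : S → Bool} (h : NCR A σ)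
    {u v : S} (hu : u ∈ scafs A) (huv : u ≠ v)
    (hconn : Relation.ReflTransGen (ogAdjP A) u v)
    (hcyc : ∀ w, Relation.ReflTransGen (ogAdjP A) u w →
      (A.filter (fun p => p.s1 = w ∨ p.s2 = w)).card = 2) :
    ∀ b, ∃ c x, Relation.ReflTransGen (stepR A σ) (u, b) x ∧ adjE A σ x (v, c) := by
  have htot := totality h u hcyc
  rcases main1 h u v hconn with rfl | ⟨b0, c0, x0, hw0, ha0⟩
  · exact absurd rfl huv
  intro b
  by_cases hb : b = b0
  · exact ⟨c0, x0, hb ▸ hw0, ha0⟩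
  · have hb' : b = !b0 := by cases b <;> cases b0 <;> simp_all
    subst hb'
    have h1 : Relation.ReflTransGen (stepR A σ) (u, b0) (v, !c0) :=
      hw0.tail ⟨(v, c0), ha0, rfl⟩
    have h2 : Relation.ReflTransGen (stepR A σ) (v, !c0) (u, b0) :=
      reach_back h htot .refl hu h1
    have h3 : Relation.ReflTransGen (stepR A σ) (u, !b0) (v, c0) := by
      have := rtg_rev h2
      simpa [flipE] using this
    rcases Relation.ReflTransGen.cases_tail h3 with heq | ⟨w, hw', hstep⟩
    · exact absurd (congrArg Prod.fst heq) huv.symm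
    · exact ⟨!c0, w, hw', by simpa [flipE] using stepR_adj hstep⟩

/-- Reversal of a walk-with-final-edge between distinct scaffolds. -/
lemma J_rev {A : Finset (APoint S)} {σ : S → Bool} {u v : S} (huv : u ≠ v)
    {b c : Bool} {x : S × Bool}
    (hw : Relation.ReflTransGen (stepR A σ) (v, c) x) (ha : adjE A σ x (u, b)) :
    ∃ x', Relation.ReflTransGen (stepR A σ) (u, b) x' ∧ adjE A σ x' (v, c) := by
  have h1 : Relation.ReflTransGen (stepR A σ) (v, c) (u, !b) :=
    hw.tail ⟨(u, b), ha, rfl⟩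
  have h2 : Relation.ReflTransGen (stepR A σ) (u, b) (v, !c) := by
    have := rtg_rev h1
    simpa [flipE] using this
  rcases Relation.ReflTransGen.cases_tail h2 with heq | ⟨w, hw', hstep⟩
  · exact (huv.symm (congrArg Prod.fst heq)).elim
  · exact ⟨w, hw', by simpa [flipE] using stepR_adj hstep⟩

end SCCO


open SCCO in
/-- if `σ` is a non-conflicting realization of `A` and scaffolds `u, v`
lie in the same connected component of `OG(A)`, then the unoriented point `(u, v)` has
a realization consistent with the realized assembly; moreover if that component is a
cycle (every scaffold in it participates in exactly two points), every semi-oriented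
point on `u, v` also has a consistent realization. -/
theorem same_component_consistently_orientable {S : Type} [DecidableEq S]
    (A : Finset (APoint S)) (σ : S → Bool) (h : NCR A σ)
    (u v : S) (hu : u ∈ scafs A) (hv : v ∈ scafs A) (huv : u ≠ v)
    (hconn : Relation.ReflTransGen (ogAdjP A) u v) :
    consistentPt A σ ⟨u, v, none, none⟩ ∧
    ((∀ w : S, Relation.ReflTransGen (ogAdjP A) u w →
        (A.filter (fun p => p.s1 = w ∨ p.s2 = w)).card = 2) →
      ∀ q : APoint S, q.s1 = u → q.s2 = v → (q.o1 = none ∨ q.o2 = none) →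
        consistentPt A σ q) := by
  constructor
  · rcases main1 h u v hconn with rfl | ⟨b, c, x, hw, ha⟩
    · exact absurd rfl huv
    · exact ⟨b, !c, by simp, by simp, x, hw, by simpa [Bool.not_not] using ha⟩
  · intro hcyc q hq1 hq2 hq3
    have hconn' : Relation.ReflTransGen (ogAdjP A) v u :=
      (@Relation.ReflTransGen.stdSymm _ _ ⟨fun _ _ h => ogAdjP_symm h⟩).symm _ _ hconn
    have hcyc' : ∀ w, Relation.ReflTransGen (ogAdjP A) v w →
        (A.filter (fun p => p.s1 = w ∨ p.s2 = w)).card = 2 :=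
      fun w hw => hcyc w (hconn.trans hw)
    have Jab := cycle_all h hu huv hconn hcyc
    have Jba := cycle_all h hv huv.symm hconn' hcyc'
    have Jrev : ∀ c, ∃ b x, Relation.ReflTransGen (stepR A σ) (u, b) x ∧
        adjE A σ x (v, c) := by
      intro c
      obtain ⟨b, x, hw, ha⟩ := Jba c
      obtain ⟨x', hw', ha'⟩ := J_rev huv hw ha
      exact ⟨b, x', hw', ha'⟩
    cases ho1 : q.o1 with
    | none =>
      cases ho2 : q.o2 with
      | none =>
        obtain ⟨c, x, hw, ha⟩ := Jab true
        exact ⟨true, !c, by simp [ho1], by simp [ho2], x, by rwa [hq1],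
          by rw [hq2, Bool.not_not]; exact ha⟩
      | some b2 =>
        obtain ⟨b, x, hw, ha⟩ := Jrev (!b2)
        exact ⟨b, b2, by simp [ho1],
          fun c hc => by rw [ho2] at hc; exact Option.some_inj.mp hc, x,
          by rwa [hq1], by rw [hq2]; exact ha⟩
    | some b1 =>
      have ho2 : q.o2 = none := by
        rcases hq3 with h' | h'
        · rw [ho1] at h'; exact absurd h' (by simp)
        · exact h'
      obtain ⟨c, x, hw, ha⟩ := Jab b1
      exact ⟨b1, !c,
        fun c' hc => by rw [ho1] at hc; exact Option.some_inj.mp hc,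
        by simp [ho2], x, by rwa [hq1], by rw [hq2, Bool.not_not]; exact ha⟩
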